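/- Let Γ be a finite simplicial graph, A(Γ) its right-angled Artin group, and v a vertex of Γ with dual class f_v ∈ H^1(A(Γ); Q). Then the linear map H^1(A(Γ); Q) → H^2(A(Γ); Q) given by cup product with f_v has rank equal to the degree of the vertex v in Γ. -/

import Mathlib

open scoped commutatorElement

/-- The defining relations of the right-angled Artin group on a graph `Γ`:
commutators of generators spanning an edge. -/
def raagRels {V : Type*} (Γ : SimpleGraph V) : Set (FreeGroup V) :=
  {r | ∃ v w : V, Γ.Adj v w ∧ r = ⁅FreeGroup.of v, FreeGroup.of w⁆}

/-- The right-angled Artin group `A(Γ)` of a graph `Γ`. -/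
def RAAG {V : Type*} (Γ : SimpleGraph V) : Type _ := PresentedGroup (raagRels Γ)

instance {V : Type*} (Γ : SimpleGraph V) : Group (RAAG Γ) :=
  QuotientGroup.Quotient.group _

/-- The generator of `A(Γ)` corresponding to a vertex. -/
def RAAG.gen {V : Type*} (Γ : SimpleGraph V) (v : V) : RAAG Γ :=
  PresentedGroup.of (rels := raagRels Γ) v

/-- The defining relations of the right-angled Coxeter group on a graph `Γ`:
edge commutators together with the squares of all generators. -/
def racgRels {V : Type*} (Γ : SimpleGraph V) : Set (FreeGroup V) :=
  raagRels Γ ∪ {r | ∃ v : V, r = (FreeGroup.of v) ^ 2}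

/-- The right-angled Coxeter group `C(Γ)` of a graph `Γ`. -/
def RACG {V : Type*} (Γ : SimpleGraph V) : Type _ := PresentedGroup (racgRels Γ)

instance {V : Type*} (Γ : SimpleGraph V) : Group (RACG Γ) :=
  QuotientGroup.Quotient.group _

/-- The generator of `C(Γ)` corresponding to a vertex. -/
def RACG.gen {V : Type*} (Γ : SimpleGraph V) (v : V) : RACG Γ :=
  PresentedGroup.of (rels := racgRels Γ) v
section GroupCohomologyLowDim

variable (k : Type*) [CommRing k] (G : Type*) [Group G]

/-- `H¹(G; k)` with trivial coefficients: additive homomorphisms `G → k`,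
as a `k`-module. -/
def H1 : Submodule k (G → k) where
  carrier := {f | ∀ x y : G, f (x * y) = f x + f y}
  add_mem' := by
    intro f g hf hg x y
    simp only [Pi.add_apply, hf x y, hg x y]; ring
  zero_mem' := by intro x y; simp
  smul_mem' := by
    intro a f hf x y
    simp only [Pi.smul_apply, smul_eq_mul, hf x y]; ring

variable {k G} in
/-- The (inhomogeneous) 2-cocycle condition for trivial coefficients. -/
def IsTwoCocycle (c : G → G → k) : Prop :=
  ∀ x y z : G, c y z - c (x * y) z + c x (y * z) - c x y = 0

variable {k G} in
/-- The (inhomogeneous) 2-coboundary condition for trivial coefficients. -/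
def IsTwoCoboundary (c : G → G → k) : Prop :=
  ∃ f : G → k, ∀ x y : G, c x y = f x - f (x * y) + f y

/-- The `k`-module of 2-cocycles on `G` with trivial coefficients. -/
def twoCocycles : Submodule k (G → G → k) where
  carrier := {c | IsTwoCocycle c}
  add_mem' := by
    intro c d hc hd x y z
    have h1 := hc x y z
    have h2 := hd x y z
    simp only [Pi.add_apply]
    linear_combination h1 + h2
  zero_mem' := by intro x y z; simp
  smul_mem' := by
    intro a c hc x y z
    have h1 := hc x y z
    simp only [Pi.smul_apply, smul_eq_mul]
    linear_combination a * h1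

/-- The 2-coboundaries, as a submodule of the 2-cocycles. -/
def twoCoboundariesIn : Submodule k (twoCocycles k G) where
  carrier := {c | IsTwoCoboundary (c : G → G → k)}
  add_mem' := by
    rintro c d ⟨f, hf⟩ ⟨g, hg⟩
    exact ⟨f + g, fun x y => by
      simp only [Submodule.coe_add, Pi.add_apply, hf x y, hg x y]; ring⟩
  zero_mem' := ⟨0, fun x y => by simp⟩
  smul_mem' := by
    rintro a c ⟨f, hf⟩
    exact ⟨a • f, fun x y => by
      simp only [SetLike.val_smul, Pi.smul_apply, smul_eq_mul, hf x y]; ring⟩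

/-- `H²(G; k)` with trivial coefficients: 2-cocycles modulo 2-coboundaries. -/
def H2 : Type _ := twoCocycles k G ⧸ twoCoboundariesIn k G

noncomputable instance : AddCommGroup (H2 k G) := by
  unfold H2; infer_instance

noncomputable instance : Module k (H2 k G) := by
  unfold H2; infer_instance

variable {k G} in
/-- The 2-cocycle `(x, y) ↦ f x * g y` given by two 1-cocycles. -/
def cupCocycle (f g : H1 k G) : twoCocycles k G :=
  ⟨fun x y => f.1 x * g.1 y, by
    intro x y z
    have hf := f.2 x y
    have hg := g.2 y z
    simp only [Set.mem_setOf_eq] at hf hg ⊢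
    linear_combination (f.1 x : k) * hg - (g.1 z : k) * hf⟩

/-- The cup product `H¹(G;k) × H¹(G;k) → H²(G;k)` as a `k`-bilinear map. -/
noncomputable def cup : H1 k G →ₗ[k] H1 k G →ₗ[k] H2 k G :=
  LinearMap.mk₂ k (fun f g => Submodule.Quotient.mk (cupCocycle f g))
    (by
      intro f f' g
      have h : cupCocycle (f + f') g = cupCocycle f g + cupCocycle f' g := by
        apply Subtype.ext; funext x y; simp [cupCocycle]; ring
      show Submodule.Quotient.mk (cupCocycle (f + f') g) = _
      rw [h, Submodule.Quotient.mk_add]; rfl)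
    (by
      intro a f g
      have h : cupCocycle (a • f) g = a • cupCocycle f g := by
        apply Subtype.ext; funext x y; simp [cupCocycle]; ring
      show Submodule.Quotient.mk (cupCocycle (a • f) g) = _
      rw [h, Submodule.Quotient.mk_smul]; rfl)
    (by
      intro f g g'
      have h : cupCocycle f (g + g') = cupCocycle f g + cupCocycle f g' := by
        apply Subtype.ext; funext x y; simp [cupCocycle]; ring
      show Submodule.Quotient.mk (cupCocycle f (g + g')) = _
      rw [h, Submodule.Quotient.mk_add]; rfl)
    (by
      intro a f g
      have h : cupCocycle f (a • g) = a • cupCocycle f g := by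
        apply Subtype.ext; funext x y; simp [cupCocycle]; ring
      show Submodule.Quotient.mk (cupCocycle f (a • g)) = _
      rw [h, Submodule.Quotient.mk_smul]; rfl)

variable {k G}

variable {G' : Type*} [Group G']

/-- The map on `H¹` induced by a group homomorphism. -/
def H1map (φ : G →* G') : H1 k G' →ₗ[k] H1 k G where
  toFun f := ⟨f.1 ∘ φ, by intro x y; simp only [Function.comp_apply, map_mul]; exact f.2 _ _⟩
  map_add' f g := rfl
  map_smul' a f := rfl

/-- The pull-back of 2-cocycles along a group homomorphism. -/
def twoCocyclesMap (φ : G →* G') : twoCocycles k G' →ₗ[k] twoCocycles k G where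
  toFun c := ⟨fun x y => c.1 (φ x) (φ y), by
    intro x y z
    have := c.2 (φ x) (φ y) (φ z)
    simp only [map_mul] at *
    exact this⟩
  map_add' c d := rfl
  map_smul' a c := rfl

/-- The map on `H²` induced by a group homomorphism. -/
noncomputable def H2map (φ : G →* G') : H2 k G' →ₗ[k] H2 k G :=
  Submodule.mapQ (twoCoboundariesIn k G') (twoCoboundariesIn k G) (twoCocyclesMap φ)
    (by
      rintro c ⟨f, hf⟩
      exact ⟨f ∘ φ, fun x y => by
        simp only [Function.comp_apply, map_mul, twoCocyclesMap, LinearMap.coe_mk,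
          AddHom.coe_mk]
        exact hf _ _⟩)

end GroupCohomologyLowDim
section DualClassesAndProjection

variable {V : Type*} [DecidableEq V] (Γ : SimpleGraph V) (k : Type*) [CommRing k]

/-- The homomorphism `A(Γ) → k` (written multiplicatively) dual to a vertex `v`,
sending `v ↦ 1` and all other generators to `0`. -/
def RAAG.dualHom (v : V) : RAAG Γ →* Multiplicative k :=
  PresentedGroup.toGroup
    (f := fun w => Multiplicative.ofAdd (if w = v then (1 : k) else 0))
    (by
      rintro r ⟨a, b, hab, rfl⟩
      rw [map_commutatorElement]
      exact commutatorElement_eq_one_iff_commute.mpr (mul_comm _ _))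

/-- The cohomology class `f_v ∈ H¹(A(Γ); k)` dual to the vertex `v`. -/
def RAAG.dual (v : V) : H1 k (RAAG Γ) :=
  ⟨fun g => Multiplicative.toAdd (RAAG.dualHom Γ k v g), by
    intro x y
    simp [map_mul]⟩

/-- The canonical surjection `A(Γ) → C(Γ)`. -/
def raagToRacg : RAAG Γ →* RACG Γ :=
  PresentedGroup.toGroup (f := fun v => RACG.gen Γ v) (by
    intro r hr
    have h : FreeGroup.lift (fun v => RACG.gen Γ v) = PresentedGroup.mk (racgRels Γ) := by
      apply FreeGroup.ext_hom
      intro a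
      simp only [FreeGroup.lift_apply_of]
      rfl
    rw [h]
    have hmem : r ∈ Subgroup.normalClosure (racgRels Γ) :=
      Subgroup.subset_normalClosure (Set.mem_union_left _ hr)
    exact (QuotientGroup.eq_one_iff r).mpr hmem)

end DualClassesAndProjection



section AuxLemmas

variable {k : Type*} [CommRing k] {G : Type*} [Group G]

lemma H1.val_one (f : H1 k G) : f.1 1 = 0 := by
  have := f.2 1 1
  rw [mul_one] at this
  linear_combination -this

lemma H1.val_inv (f : H1 k G) (x : G) : f.1 x⁻¹ = -f.1 x := by
  have := f.2 x x⁻¹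
  rw [mul_inv_cancel, H1.val_one f] at this
  linear_combination -this

/-- Two elements of `H1` agreeing on a generating set are equal. -/
lemma H1.ext_on {f g : H1 k G} {s : Set G} (hs : Subgroup.closure s = ⊤)
    (h : ∀ x ∈ s, f.1 x = g.1 x) : f = g := by
  apply Subtype.ext
  funext x
  have hx : x ∈ Subgroup.closure s := by rw [hs]; trivial
  induction hx using Subgroup.closure_induction with
  | mem y hy => exact h y hy
  | one => rw [H1.val_one, H1.val_one]
  | mul y z _ _ hy hz => rw [f.2, g.2, hy, hz]
  | inv y _ hy => rw [H1.val_inv, H1.val_inv, hy]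

end AuxLemmas

/-- The rational Heisenberg group, used to produce explicit 2-coboundaries. -/
@[ext] structure Heis where
  x : ℚ
  y : ℚ
  z : ℚ

namespace Heis

instance : Mul Heis := ⟨fun p q => ⟨p.x + q.x, p.y + q.y, p.z + q.z + p.x * q.y⟩⟩
instance : One Heis := ⟨⟨0, 0, 0⟩⟩
instance : Inv Heis := ⟨fun p => ⟨-p.x, -p.y, -p.z + p.x * p.y⟩⟩

@[simp] lemma mul_x (p q : Heis) : (p * q).x = p.x + q.x := rfl
@[simp] lemma mul_y (p q : Heis) : (p * q).y = p.y + q.y := rfl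
@[simp] lemma mul_z (p q : Heis) : (p * q).z = p.z + q.z + p.x * q.y := rfl
@[simp] lemma one_x : (1 : Heis).x = 0 := rfl
@[simp] lemma one_y : (1 : Heis).y = 0 := rfl
@[simp] lemma one_z : (1 : Heis).z = 0 := rfl
@[simp] lemma inv_x (p : Heis) : p⁻¹.x = -p.x := rfl
@[simp] lemma inv_y (p : Heis) : p⁻¹.y = -p.y := rfl
@[simp] lemma inv_z (p : Heis) : p⁻¹.z = -p.z + p.x * p.y := rfl

instance : Group Heis where
  mul_assoc p q r := by ext <;> simp <;> ring
  one_mul p := by ext <;> simp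
  mul_one p := by ext <;> simp
  inv_mul_cancel p := by ext <;> simp

end Heis

section RAAGProof

variable {V : Type} [DecidableEq V] (Γ : SimpleGraph V)

/-- Adjacent generators commute in the RAAG. -/
lemma RAAG.gen_commute {a b : V} (h : Γ.Adj a b) :
    Commute (RAAG.gen Γ a) (RAAG.gen Γ b) := by
  rw [← commutatorElement_eq_one_iff_commute]
  have hmem : (⁅FreeGroup.of a, FreeGroup.of b⁆ : FreeGroup V)
      ∈ Subgroup.normalClosure (raagRels Γ) :=
    Subgroup.subset_normalClosure ⟨a, b, h, rfl⟩
  have heq : (⁅RAAG.gen Γ a, RAAG.gen Γ b⁆ : RAAG Γ)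
      = PresentedGroup.mk (raagRels Γ) ⁅FreeGroup.of a, FreeGroup.of b⁆ := by
    rw [map_commutatorElement]; rfl
  rw [heq]
  exact (QuotientGroup.eq_one_iff _).mpr hmem

lemma RAAG.closure_range_gen :
    Subgroup.closure (Set.range (RAAG.gen Γ)) = (⊤ : Subgroup (RAAG Γ)) :=
  PresentedGroup.closure_range_of (raagRels Γ)

/-- The homomorphism `A(Γ) → k` sending each generator `w` to `b w`. -/
def RAAG.ofFunHom (k : Type*) [CommRing k] (b : V → k) : RAAG Γ →* Multiplicative k :=
  PresentedGroup.toGroup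
    (f := fun w => Multiplicative.ofAdd (b w))
    (by
      rintro r ⟨u, u', huu', rfl⟩
      rw [map_commutatorElement]
      exact commutatorElement_eq_one_iff_commute.mpr (mul_comm _ _))

/-- The class in `H¹(A(Γ); k)` sending each generator `w` to `b w`. -/
def RAAG.ofFun (k : Type*) [CommRing k] (b : V → k) : H1 k (RAAG Γ) :=
  ⟨fun g => Multiplicative.toAdd (RAAG.ofFunHom Γ k b g), by
    intro x y
    simp [map_mul]⟩

@[simp] lemma RAAG.ofFun_gen (k : Type*) [CommRing k] (b : V → k) (w : V) :
    (RAAG.ofFun Γ k b).1 (RAAG.gen Γ w) = b w := by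
  have h := PresentedGroup.toGroup.of (rels := raagRels Γ)
    (f := fun w => Multiplicative.ofAdd (b w))
    (by
      rintro r ⟨u, u', huu', rfl⟩
      rw [map_commutatorElement]
      exact commutatorElement_eq_one_iff_commute.mpr (mul_comm _ _)) (x := w)
  exact congrArg Multiplicative.toAdd h

@[simp] lemma RAAG.dual_gen (k : Type*) [CommRing k] (v w : V) :
    (RAAG.dual Γ k v).1 (RAAG.gen Γ w) = if w = v then 1 else 0 := by
  have h := PresentedGroup.toGroup.of (rels := raagRels Γ)
    (f := fun w => Multiplicative.ofAdd (if w = v then (1 : k) else 0))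
    (by
      rintro r ⟨u, u', huu', rfl⟩
      rw [map_commutatorElement]
      exact commutatorElement_eq_one_iff_commute.mpr (mul_comm _ _)) (x := w)
  exact congrArg Multiplicative.toAdd h

/-- Every class in `H¹(A(Γ); k)` is of the form `ofFun`. -/
lemma RAAG.ofFun_val_gen (k : Type*) [CommRing k] (f : H1 k (RAAG Γ)) :
    RAAG.ofFun Γ k (fun u => f.1 (RAAG.gen Γ u)) = f := by
  apply H1.ext_on (RAAG.closure_range_gen Γ)
  rintro _ ⟨u, rfl⟩
  rw [RAAG.ofFun_gen]

/-- `ofFun` as a linear map. -/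
noncomputable def RAAG.ofFunL : (V → ℚ) →ₗ[ℚ] H1 ℚ (RAAG Γ) where
  toFun b := RAAG.ofFun Γ ℚ b
  map_add' b c := by
    apply H1.ext_on (RAAG.closure_range_gen Γ)
    rintro _ ⟨u, rfl⟩
    show (RAAG.ofFun Γ ℚ (b + c)).1 (RAAG.gen Γ u)
        = (RAAG.ofFun Γ ℚ b).1 (RAAG.gen Γ u) + (RAAG.ofFun Γ ℚ c).1 (RAAG.gen Γ u)
    rw [RAAG.ofFun_gen, RAAG.ofFun_gen, RAAG.ofFun_gen]
    rfl
  map_smul' a b := by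
    apply H1.ext_on (RAAG.closure_range_gen Γ)
    rintro _ ⟨u, rfl⟩
    show (RAAG.ofFun Γ ℚ (a • b)).1 (RAAG.gen Γ u)
        = a * (RAAG.ofFun Γ ℚ b).1 (RAAG.gen Γ u)
    rw [RAAG.ofFun_gen, RAAG.ofFun_gen]
    rfl

lemma RAAG.ofFunL_surjective : Function.Surjective (RAAG.ofFunL Γ) := fun f =>
  ⟨fun u => f.1 (RAAG.gen Γ u), RAAG.ofFun_val_gen Γ ℚ f⟩

/-- The key vanishing criterion: if the values of `F` and `G` on generators satisfy the
"symmetry on edges" condition, then the cup product `F ⌣ G` vanishes in `H²`.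
The coboundary is produced from a homomorphism to the Heisenberg group. -/
lemma cup_eq_zero_of_symm_on_edges (F G : H1 ℚ (RAAG Γ))
    (h : ∀ a b : V, Γ.Adj a b →
      F.1 (RAAG.gen Γ a) * G.1 (RAAG.gen Γ b) = F.1 (RAAG.gen Γ b) * G.1 (RAAG.gen Γ a)) :
    cup ℚ (RAAG Γ) F G = 0 := by
  have hrel : ∀ r ∈ raagRels Γ, FreeGroup.lift
      (fun u => (⟨F.1 (RAAG.gen Γ u), G.1 (RAAG.gen Γ u), 0⟩ : Heis)) r = 1 := by
    rintro r ⟨a, b, hab, rfl⟩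
    rw [map_commutatorElement]
    apply commutatorElement_eq_one_iff_commute.mpr
    show _ * _ = _ * _
    simp only [FreeGroup.lift_apply_of]
    ext
    · show F.1 (RAAG.gen Γ a) + F.1 (RAAG.gen Γ b)
          = F.1 (RAAG.gen Γ b) + F.1 (RAAG.gen Γ a)
      ring
    · show G.1 (RAAG.gen Γ a) + G.1 (RAAG.gen Γ b)
          = G.1 (RAAG.gen Γ b) + G.1 (RAAG.gen Γ a)
      ring
    · show (0 : ℚ) + 0 + F.1 (RAAG.gen Γ a) * G.1 (RAAG.gen Γ b)
          = 0 + 0 + F.1 (RAAG.gen Γ b) * G.1 (RAAG.gen Γ a)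
      linear_combination h a b hab
  set ψ : RAAG Γ →* Heis := PresentedGroup.toGroup hrel with hψ
  have hψgen : ∀ u : V, ψ (RAAG.gen Γ u)
      = (⟨F.1 (RAAG.gen Γ u), G.1 (RAAG.gen Γ u), 0⟩ : Heis) := fun u =>
    PresentedGroup.toGroup.of hrel
  have hF : F = ⟨fun g => (ψ g).x, by
      intro a b
      show (ψ (a * b)).x = (ψ a).x + (ψ b).x
      rw [map_mul, Heis.mul_x]⟩ := by
    apply H1.ext_on (RAAG.closure_range_gen Γ)
    rintro _ ⟨u, rfl⟩
    show F.1 (RAAG.gen Γ u) = (ψ (RAAG.gen Γ u)).x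
    rw [hψgen u]
  have hG : G = ⟨fun g => (ψ g).y, by
      intro a b
      show (ψ (a * b)).y = (ψ a).y + (ψ b).y
      rw [map_mul, Heis.mul_y]⟩ := by
    apply H1.ext_on (RAAG.closure_range_gen Γ)
    rintro _ ⟨u, rfl⟩
    show G.1 (RAAG.gen Γ u) = (ψ (RAAG.gen Γ u)).y
    rw [hψgen u]
  show Submodule.Quotient.mk (cupCocycle F G) = 0
  rw [Submodule.Quotient.mk_eq_zero]
  show IsTwoCoboundary ((cupCocycle F G : twoCocycles ℚ (RAAG Γ)) : RAAG Γ → RAAG Γ → ℚ)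
  refine ⟨fun g => -(ψ g).z, fun a b => ?_⟩
  show F.1 a * G.1 b = -(ψ a).z - -(ψ (a * b)).z + -(ψ b).z
  rw [hF, hG]
  show (ψ a).x * (ψ b).y = -(ψ a).z - -(ψ (a * b)).z + -(ψ b).z
  rw [map_mul, Heis.mul_z]
  ring

variable [Fintype V] [DecidableRel Γ.Adj]

/-- Evaluation of 2-cocycles at pairs of commuting generators, antisymmetrized. -/
noncomputable def evalCocycles (v : V) :
    twoCocycles ℚ (RAAG Γ) →ₗ[ℚ] ({w // w ∈ Γ.neighborFinset v} → ℚ) :=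
  LinearMap.pi fun w =>
    ((LinearMap.proj (RAAG.gen Γ w.1)).comp
      ((LinearMap.proj (RAAG.gen Γ v)).comp
        (Submodule.subtype (twoCocycles ℚ (RAAG Γ)))))
    - ((LinearMap.proj (RAAG.gen Γ v)).comp
      ((LinearMap.proj (RAAG.gen Γ w.1)).comp
        (Submodule.subtype (twoCocycles ℚ (RAAG Γ)))))

lemma coboundaries_le_ker_eval (v : V) :
    twoCoboundariesIn ℚ (RAAG Γ) ≤ LinearMap.ker (evalCocycles Γ v) := by
  intro c hc
  have hcb : IsTwoCoboundary ((c : twoCocycles ℚ (RAAG Γ)) : RAAG Γ → RAAG Γ → ℚ) := hc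
  obtain ⟨g, hg⟩ := hcb
  rw [LinearMap.mem_ker]
  funext w
  show (c : RAAG Γ → RAAG Γ → ℚ) (RAAG.gen Γ v) (RAAG.gen Γ w.1)
      - (c : RAAG Γ → RAAG Γ → ℚ) (RAAG.gen Γ w.1) (RAAG.gen Γ v) = 0
  have hadj : Γ.Adj v w.1 := (SimpleGraph.mem_neighborFinset Γ v w.1).mp w.2
  rw [hg, hg, (RAAG.gen_commute Γ hadj).eq]
  ring

/-- The induced evaluation map on `H²`. -/
noncomputable def evalH2 (v : V) :
    H2 ℚ (RAAG Γ) →ₗ[ℚ] ({w // w ∈ Γ.neighborFinset v} → ℚ) :=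
  Submodule.liftQ (twoCoboundariesIn ℚ (RAAG Γ)) (evalCocycles Γ v)
    (coboundaries_le_ker_eval Γ v)

end RAAGProof

/-- For a vertex `v` of a finite graph `Γ`, the linear map
`H¹(A(Γ); ℚ) → H²(A(Γ); ℚ)` given by cup product with the dual class `f_v`
has rank equal to the degree of `v` in `Γ`. -/
theorem rank_cup_dual_eq_degree {V : Type} [Fintype V] [DecidableEq V]
    (Γ : SimpleGraph V) [DecidableRel Γ.Adj] (v : V) :
    Module.finrank ℚ (LinearMap.range (cup ℚ (RAAG Γ) (RAAG.dual Γ ℚ v))) = Γ.degree v := by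
  classical
  set S : Finset V := Γ.neighborFinset v with hS
  set C : H1 ℚ (RAAG Γ) →ₗ[ℚ] H2 ℚ (RAAG Γ) := cup ℚ (RAAG Γ) (RAAG.dual Γ ℚ v) with hC
  set D : (V → ℚ) →ₗ[ℚ] H2 ℚ (RAAG Γ) := C ∘ₗ RAAG.ofFunL Γ with hD
  have hrange : LinearMap.range D = LinearMap.range C :=
    LinearMap.range_comp_of_range_eq_top _
      (LinearMap.range_eq_top.mpr (RAAG.ofFunL_surjective Γ))
  have hDval : ∀ b : V → ℚ,
      D b = cup ℚ (RAAG Γ) (RAAG.dual Γ ℚ v) (RAAG.ofFun Γ ℚ b) := fun b => rfl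
  -- vanishing on non-neighbors
  have hzero : ∀ w : V, ¬ Γ.Adj v w →
      D (fun j => if w = j then (1 : ℚ) else 0) = 0 := by
    intro w hw
    rw [hDval]
    apply cup_eq_zero_of_symm_on_edges
    intro a b hab
    have hne1 : ¬(a = v ∧ w = b) := by rintro ⟨rfl, rfl⟩; exact hw hab
    have hne2 : ¬(b = v ∧ w = a) := by rintro ⟨rfl, rfl⟩; exact hw hab.symm
    rw [RAAG.dual_gen, RAAG.dual_gen, RAAG.ofFun_gen, RAAG.ofFun_gen]
    split_ifs <;> try ring
    all_goals
      first
        | (exact absurd (And.intro ‹a = v› ‹w = b›) hne1)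
        | (exact absurd (And.intro ‹b = v› ‹w = a›) hne2)
  -- upper bound
  have hup : Module.finrank ℚ (LinearMap.range D) ≤ S.card := by
    have hsub : LinearMap.range D ≤ Submodule.span ℚ
        ((S.image (fun w => D (fun j => if w = j then (1 : ℚ) else 0)) :
          Finset (H2 ℚ (RAAG Γ))) : Set (H2 ℚ (RAAG Γ))) := by
      rintro _ ⟨b, rfl⟩
      rw [pi_eq_sum_univ b, map_sum]
      apply Submodule.sum_mem
      intro u _
      rw [map_smul]
      by_cases hu : u ∈ S
      · exact Submodule.smul_mem _ _
          (Submodule.subset_span (Finset.mem_coe.mpr (Finset.mem_image_of_mem _ hu)))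
      · rw [hzero u (by simpa [hS, SimpleGraph.mem_neighborFinset] using hu)]
        simp
    calc Module.finrank ℚ (LinearMap.range D)
        ≤ Module.finrank ℚ (Submodule.span ℚ
            ((S.image (fun w => D (fun j => if w = j then (1 : ℚ) else 0)) :
              Finset (H2 ℚ (RAAG Γ))) : Set (H2 ℚ (RAAG Γ)))) :=
          Submodule.finrank_mono hsub
      _ ≤ (S.image (fun w => D (fun j => if w = j then (1 : ℚ) else 0))).card :=
          finrank_span_finset_le_card _
      _ ≤ S.card := Finset.card_image_le
  -- lower bound
  have hlow : S.card ≤ Module.finrank ℚ (LinearMap.range D) := by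
    have hED : (evalH2 Γ v) ∘ₗ D
        = LinearMap.funLeft ℚ ℚ (Subtype.val : {w // w ∈ Γ.neighborFinset v} → V) := by
      apply LinearMap.ext
      intro b
      funext w
      have hadj : Γ.Adj v w.1 := (SimpleGraph.mem_neighborFinset Γ v w.1).mp w.2
      have hwv : w.1 ≠ v := hadj.ne'
      show (RAAG.dual Γ ℚ v).1 (RAAG.gen Γ v) * (RAAG.ofFun Γ ℚ b).1 (RAAG.gen Γ w.1)
          - (RAAG.dual Γ ℚ v).1 (RAAG.gen Γ w.1) * (RAAG.ofFun Γ ℚ b).1 (RAAG.gen Γ v)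
          = b w.1
      rw [RAAG.dual_gen, RAAG.dual_gen, RAAG.ofFun_gen, RAAG.ofFun_gen, if_pos rfl,
        if_neg hwv]
      ring
    have hsurj : Function.Surjective ((evalH2 Γ v) ∘ₗ D) := by
      rw [hED]
      exact LinearMap.funLeft_surjective_of_injective _ _ _ Subtype.val_injective
    have h1 : LinearMap.range ((evalH2 Γ v) ∘ₗ D) = ⊤ := LinearMap.range_eq_top.mpr hsurj
    have h2 : LinearMap.range ((evalH2 Γ v) ∘ₗ D)
        = (LinearMap.range D).map (evalH2 Γ v) := LinearMap.range_comp _ _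
    calc S.card = Fintype.card {w // w ∈ Γ.neighborFinset v} := (Fintype.card_coe S).symm
      _ = Module.finrank ℚ ({w // w ∈ Γ.neighborFinset v} → ℚ) :=
          (Module.finrank_fintype_fun_eq_card ℚ).symm
      _ = Module.finrank ℚ (⊤ : Submodule ℚ ({w // w ∈ Γ.neighborFinset v} → ℚ)) :=
          (finrank_top _ _).symm
      _ = Module.finrank ℚ ((LinearMap.range D).map (evalH2 Γ v)) := by rw [← h1, h2]
      _ ≤ Module.finrank ℚ (LinearMap.range D) := Submodule.finrank_map_le _ _
  rw [← hrange, ← SimpleGraph.card_neighborFinset_eq_degree, ← hS]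
  exact le_antisymm hup hlow
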